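/- arXiv:1904.03865 — 4 statements merged into one kernel-verified Lean document; each statement's English description precedes it below -/
import Mathlib

section
/- For γ ∈ ℝ, Δt > 0, α ∈ [0,1], and ε > 0, define θ_α = ε^(1+α)/(ε^(1+α)+Δt) and the eigenvalues λ_± = (1/2)(γ(1-θ_α) ± sqrt(γ²(1-θ_α)² + 4 ε^(-2α) θ_α²)). Then as ε → 0⁺ (with Δt fixed), λ_+ tends to (γ+|γ|)/2 and λ_- tends to (γ-|γ|)/2. -/
open Filter Topology

/-- As ε → 0⁺, the eigenvalues λ_± of the modified IMEX system tend to
(γ ± |γ|)/2. -/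
theorem stmt_0 (γ Δt α : ℝ) (hΔt : 0 < Δt) (hα : α ∈ Set.Icc (0:ℝ) 1) :
    Tendsto (fun ε : ℝ =>
        (1/2) * (γ * (1 - ε ^ (1+α) / (ε ^ (1+α) + Δt)) +
          Real.sqrt (γ^2 * (1 - ε ^ (1+α) / (ε ^ (1+α) + Δt))^2 +
            4 * ε ^ (-(2*α)) * (ε ^ (1+α) / (ε ^ (1+α) + Δt))^2)))
      (nhdsWithin 0 (Set.Ioi 0)) (nhds ((γ + |γ|)/2)) ∧
    Tendsto (fun ε : ℝ =>
        (1/2) * (γ * (1 - ε ^ (1+α) / (ε ^ (1+α) + Δt)) -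
          Real.sqrt (γ^2 * (1 - ε ^ (1+α) / (ε ^ (1+α) + Δt))^2 +
            4 * ε ^ (-(2*α)) * (ε ^ (1+α) / (ε ^ (1+α) + Δt))^2)))
      (nhdsWithin 0 (Set.Ioi 0)) (nhds ((γ - |γ|)/2)) := by
  obtain ⟨hα0, hα1⟩ := hα
  set L := nhdsWithin (0:ℝ) (Set.Ioi 0)
  -- g ε = ε ^ (1+α) tends to 0
  have hg : Tendsto (fun ε : ℝ => ε ^ (1+α)) L (nhds 0) := by
    have hc : ContinuousAt (fun ε : ℝ => ε ^ (1+α)) 0 :=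
      Real.continuousAt_rpow_const 0 (1+α) (Or.inr (by linarith))
    have := hc.tendsto
    rw [Real.zero_rpow (by positivity)] at this
    exact this.mono_left nhdsWithin_le_nhds
  have hden : Tendsto (fun ε : ℝ => ε ^ (1+α) + Δt) L (nhds Δt) := by
    simpa using hg.add tendsto_const_nhds
  -- θ tends to 0
  have hθ : Tendsto (fun ε : ℝ => ε ^ (1+α) / (ε ^ (1+α) + Δt)) L (nhds 0) := by
    have := hg.div hden hΔt.ne'
    rw [zero_div] at this
    exact this
  -- 4 ε^(-(2α)) θ² tends to 0
  have hA : Tendsto (fun ε : ℝ =>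
      4 * ε ^ (-(2*α)) * (ε ^ (1+α) / (ε ^ (1+α) + Δt))^2) L (nhds 0) := by
    have heq : ∀ᶠ ε in L,
        4 * ε^2 / (ε ^ (1+α) + Δt)^2
          = 4 * ε ^ (-(2*α)) * (ε ^ (1+α) / (ε ^ (1+α) + Δt))^2 := by
      filter_upwards [self_mem_nhdsWithin] with ε (hε : (0:ℝ) < ε)
      have key : ε ^ (-(2*α)) * (ε ^ (1+α))^2 = ε^2 := by
        rw [← Real.rpow_natCast (ε ^ (1+α)) 2, ← Real.rpow_natCast ε 2,
          ← Real.rpow_mul hε.le, ← Real.rpow_add hε]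
        congr 1
        push_cast
        ring
      rw [div_pow, show 4 * ε ^ (-(2*α)) * ((ε ^ (1+α))^2 / (ε ^ (1+α) + Δt)^2)
          = 4 * (ε ^ (-(2*α)) * (ε ^ (1+α))^2) / (ε ^ (1+α) + Δt)^2 by ring, key]
    have h2 : Tendsto (fun ε : ℝ => 4 * ε^2 / (ε ^ (1+α) + Δt)^2) L (nhds 0) := by
      have hnum : Tendsto (fun ε : ℝ => 4 * ε^2) L (nhds 0) := by
        have : ContinuousAt (fun ε : ℝ => 4 * ε^2) 0 := by fun_prop
        have := this.tendsto
        norm_num at this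
        exact this.mono_left nhdsWithin_le_nhds
      have := hnum.div (hden.pow 2) (by positivity)
      rw [zero_div] at this
      exact this
    exact h2.congr' heq
  -- inside of sqrt tends to γ²
  have hin : Tendsto (fun ε : ℝ =>
      γ^2 * (1 - ε ^ (1+α) / (ε ^ (1+α) + Δt))^2 +
        4 * ε ^ (-(2*α)) * (ε ^ (1+α) / (ε ^ (1+α) + Δt))^2) L (nhds (γ^2)) := by
    have h1 : Tendsto (fun ε : ℝ =>
        γ^2 * (1 - ε ^ (1+α) / (ε ^ (1+α) + Δt))^2) L (nhds (γ^2)) := by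
      have hsub : Tendsto (fun ε : ℝ => 1 - ε ^ (1+α) / (ε ^ (1+α) + Δt)) L (nhds 1) := by
        simpa using (tendsto_const_nhds (x := (1:ℝ))).sub hθ
      simpa using (tendsto_const_nhds (x := γ^2)).mul (hsub.pow 2)
    simpa using h1.add hA
  have hsqrt : Tendsto (fun ε : ℝ =>
      Real.sqrt (γ^2 * (1 - ε ^ (1+α) / (ε ^ (1+α) + Δt))^2 +
        4 * ε ^ (-(2*α)) * (ε ^ (1+α) / (ε ^ (1+α) + Δt))^2)) L (nhds |γ|) := by
    have := (Real.continuous_sqrt.continuousAt (x := γ^2)).tendsto.comp hin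
    rw [Real.sqrt_sq_eq_abs] at this
    exact this
  have hlin : Tendsto (fun ε : ℝ =>
      γ * (1 - ε ^ (1+α) / (ε ^ (1+α) + Δt))) L (nhds γ) := by
    have hsub : Tendsto (fun ε : ℝ => 1 - ε ^ (1+α) / (ε ^ (1+α) + Δt)) L (nhds 1) := by
      simpa using (tendsto_const_nhds (x := (1:ℝ))).sub hθ
    simpa using (tendsto_const_nhds (x := γ)).mul hsub
  constructor
  · have := (tendsto_const_nhds (x := (1/2:ℝ))).mul (hlin.add hsqrt)
    have heq : (1/2 : ℝ) * (γ + |γ|) = (γ + |γ|)/2 := by ring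
    rw [← heq]
    exact this
  · have := (tendsto_const_nhds (x := (1/2:ℝ))).mul (hlin.sub hsqrt)
    have heq : (1/2 : ℝ) * (γ - |γ|) = (γ - |γ|)/2 := by ring
    rw [← heq]
    exact this
end

section
/- For γ ∈ ℝ, α ∈ [0,1], Δt > 0, the function ε ↦ λ_+(Δt,ε) = (1/2)(γ(1-θ_α) + sqrt(γ²(1-θ_α)² + 4 ε^(-2α) θ_α²)) with θ_α = ε^(1+α)/(ε^(1+α)+Δt) is bounded on (0,∞): |λ_+(Δt,ε)| ≤ |γ| + Δt^(-α/(1+α)) · C for some constant C depending only on γ, α; in particular λ_+ does not blow up as ε → 0⁺. -/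
/-- The eigenvalue λ_+(Δt,ε) is bounded on ε ∈ (0,∞):
|λ_+| ≤ |γ| + Δt^(-α/(1+α)) · C with C depending only on γ, α. -/
theorem stmt_2 (γ α : ℝ) (hα : α ∈ Set.Icc (0:ℝ) 1) :
    ∃ C : ℝ, ∀ Δt : ℝ, 0 < Δt → ∀ ε : ℝ, 0 < ε →
      |(1/2) * (γ * (1 - ε ^ (1+α) / (ε ^ (1+α) + Δt)) +
          Real.sqrt (γ^2 * (1 - ε ^ (1+α) / (ε ^ (1+α) + Δt))^2 +
            4 * ε ^ (-(2*α)) * (ε ^ (1+α) / (ε ^ (1+α) + Δt))^2))|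
        ≤ |γ| + Δt ^ (-(α/(1+α))) * C := by
  obtain ⟨hα0, hα1⟩ := hα
  refine ⟨1, fun Δt hΔt ε hε => ?_⟩
  have h1α : (0:ℝ) < 1 + α := by linarith
  have ht : 0 < ε ^ (1+α) := Real.rpow_pos_of_pos hε _
  have htΔ : 0 < ε ^ (1+α) + Δt := by linarith
  set θ : ℝ := ε ^ (1+α) / (ε ^ (1+α) + Δt) with hθdef
  have hθ0 : 0 ≤ θ := le_of_lt (div_pos ht htΔ)
  have hθ1 : θ ≤ 1 := by
    rw [hθdef, div_le_one htΔ]; linarith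
  have hεα : 0 < ε ^ (-α) := Real.rpow_pos_of_pos hε _
  -- rewrite ε^(-(2α)) = (ε^(-α))^2
  have hsq : ε ^ (-(2*α)) = (ε ^ (-α))^2 := by
    rw [sq, ← Real.rpow_add hε]; ring_nf
  -- bound the sqrt
  have hS : Real.sqrt (γ^2 * (1 - θ)^2 + 4 * ε ^ (-(2*α)) * θ^2)
      ≤ |γ| * (1 - θ) + 2 * ε ^ (-α) * θ := by
    have h1 : γ^2 * (1 - θ)^2 + 4 * ε ^ (-(2*α)) * θ^2
        ≤ (|γ| * (1 - θ) + 2 * ε ^ (-α) * θ)^2 := by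
      rw [hsq]
      have : (0:ℝ) ≤ (|γ| * (1 - θ)) * (2 * ε ^ (-α) * θ) :=
        mul_nonneg (mul_nonneg (abs_nonneg γ) (by linarith)) (by positivity)
      have habs : |γ|^2 = γ^2 := sq_abs γ
      nlinarith [this]
    calc Real.sqrt (γ^2 * (1 - θ)^2 + 4 * ε ^ (-(2*α)) * θ^2)
        ≤ Real.sqrt ((|γ| * (1 - θ) + 2 * ε ^ (-α) * θ)^2) := Real.sqrt_le_sqrt h1
      _ = |γ| * (1 - θ) + 2 * ε ^ (-α) * θ := by
          rw [Real.sqrt_sq (add_nonneg (mul_nonneg (abs_nonneg γ) (by linarith)) (by positivity))]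
  -- the quantity is nonnegative
  have hSge : |γ * (1 - θ)| ≤ Real.sqrt (γ^2 * (1 - θ)^2 + 4 * ε ^ (-(2*α)) * θ^2) := by
    rw [← Real.sqrt_sq_eq_abs]
    apply Real.sqrt_le_sqrt
    have : 0 ≤ 4 * ε ^ (-(2*α)) * θ^2 := by positivity
    nlinarith [this]
  have hnn : 0 ≤ (1/2) * (γ * (1 - θ) +
      Real.sqrt (γ^2 * (1 - θ)^2 + 4 * ε ^ (-(2*α)) * θ^2)) := by
    have := neg_abs_le (γ * (1 - θ))
    nlinarith
  rw [abs_of_nonneg hnn]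
  -- key: ε^(-α) * θ ≤ Δt ^ (-(α/(1+α)))
  have hkey : ε ^ (-α) * θ ≤ Δt ^ (-(α/(1+α))) := by
    have hmul : ε ^ (-α) * ε ^ (1+α) = ε := by
      rw [← Real.rpow_add hε]; ring_nf; exact Real.rpow_one ε
    have hεθ : ε ^ (-α) * θ = ε / (ε ^ (1+α) + Δt) := by
      rw [hθdef, ← mul_div_assoc, hmul]
    rw [hεθ]
    rcases le_total (ε ^ (1+α)) Δt with hc | hc
    · -- ε ≤ Δt^(1/(1+α)), bound ε/(t+Δt) ≤ ε/Δt ≤ Δt^(1/(1+α)-1)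
      have hεle : ε ≤ Δt ^ (1/(1+α)) := by
        have := Real.rpow_le_rpow (le_of_lt ht) hc (le_of_lt (one_div_pos.mpr h1α))
        rwa [← Real.rpow_mul (le_of_lt hε), mul_one_div, div_self (ne_of_gt h1α),
          Real.rpow_one] at this
      have h2 : ε / (ε ^ (1+α) + Δt) ≤ ε / Δt :=
        div_le_div_of_nonneg_left (le_of_lt hε) hΔt (by linarith)
      have h3 : ε / Δt ≤ Δt ^ (1/(1+α)) / Δt := by gcongr
      have h4 : Δt ^ (1/(1+α)) / Δt = Δt ^ (-(α/(1+α))) := by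
        rw [div_eq_mul_inv, ← Real.rpow_neg_one Δt, ← Real.rpow_add hΔt]
        congr 1
        field_simp
        ring
      linarith
    · -- Δt ≤ ε^(1+α): ε/(t+Δt) ≤ ε^(-α) ≤ Δt^(-(α/(1+α)))
      have h2 : ε / (ε ^ (1+α) + Δt) ≤ ε / ε ^ (1+α) :=
        div_le_div_of_nonneg_left (le_of_lt hε) ht (by linarith)
      have h3 : ε / ε ^ (1+α) = ε ^ (-α) := by
        rw [div_eq_iff (ne_of_gt ht), ← Real.rpow_add hε]
        ring_nf
        exact (Real.rpow_one ε).symm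
      have hΔε : Δt ^ (1/(1+α)) ≤ ε := by
        have := Real.rpow_le_rpow (le_of_lt hΔt) hc (le_of_lt (one_div_pos.mpr h1α))
        rwa [← Real.rpow_mul (le_of_lt hε), mul_one_div, div_self (ne_of_gt h1α),
          Real.rpow_one] at this
      have h4 : ε ^ (-α) ≤ (Δt ^ (1/(1+α))) ^ (-α) :=
        Real.rpow_le_rpow_of_nonpos (Real.rpow_pos_of_pos hΔt _) hΔε (by linarith)
      have h5 : (Δt ^ (1/(1+α))) ^ (-α) = Δt ^ (-(α/(1+α))) := by
        rw [← Real.rpow_mul (le_of_lt hΔt)]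
        congr 1; field_simp
      linarith [h2, h3 ▸ h2]
  have hθsub : 1 - θ ≤ 1 := by linarith
  calc (1/2) * (γ * (1 - θ) + Real.sqrt (γ^2 * (1 - θ)^2 + 4 * ε ^ (-(2*α)) * θ^2))
      ≤ (1/2) * (|γ| * (1 - θ) + (|γ| * (1 - θ) + 2 * ε ^ (-α) * θ)) := by
        have := le_abs_self (γ * (1 - θ))
        rw [abs_mul, abs_of_nonneg (by linarith : (0:ℝ) ≤ 1 - θ)] at this
        nlinarith
    _ = |γ| * (1 - θ) + ε ^ (-α) * θ := by ring
    _ ≤ |γ| + Δt ^ (-(α/(1+α))) * 1 := by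
        have h1 : |γ| * (1 - θ) ≤ |γ| * 1 :=
          mul_le_mul_of_nonneg_left hθsub (abs_nonneg γ)
        rw [mul_one]
        linarith [hkey]
end

section
/- For fixed Δt > 0 and c_{-1} > 0, the quantity θ₁(ε) = ε²/(ε² + Δt c_{-1}) is strictly increasing in ε on (0,∞), tends to 0 as ε → 0⁺ and to 1 as ε → ∞; consequently the eigenvalue Λ_+(Δt,ε) = (1/2)(γ(1-θ₁) + sqrt(γ²(1-θ₁)² + 4 ε^(-2)θ₁²)) satisfies ε^(-1)θ₁ = ε/(ε²+Δt c_{-1}) ≤ 1/(2√(Δt c_{-1})), giving the uniform bound Λ_+(Δt,ε) ≤ |γ| + 1/√(Δt c_{-1}) for all ε > 0. -/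
open Filter Topology

/-- Monotonicity and limits of θ₁(ε) = ε²/(ε²+Δt c₋₁), the AM–GM bound
ε/(ε²+Δt c₋₁) ≤ 1/(2√(Δt c₋₁)), and the resulting uniform bound
Λ₊(Δt,ε) ≤ |γ| + 1/√(Δt c₋₁) for all ε > 0. -/
theorem stmt_16 (γ Δt cm1 : ℝ) (hΔt : 0 < Δt) (hc : 0 < cm1) :
    StrictMonoOn (fun ε : ℝ => ε^2 / (ε^2 + Δt * cm1)) (Set.Ioi 0) ∧
    Tendsto (fun ε : ℝ => ε^2 / (ε^2 + Δt * cm1))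
      (nhdsWithin 0 (Set.Ioi 0)) (nhds 0) ∧
    Tendsto (fun ε : ℝ => ε^2 / (ε^2 + Δt * cm1)) atTop (nhds 1) ∧
    (∀ ε : ℝ, 0 < ε →
      ε / (ε^2 + Δt * cm1) ≤ 1 / (2 * Real.sqrt (Δt * cm1))) ∧
    (∀ ε : ℝ, 0 < ε →
      (1/2) * (γ * (1 - ε^2 / (ε^2 + Δt * cm1)) +
          Real.sqrt (γ^2 * (1 - ε^2 / (ε^2 + Δt * cm1))^2 +
            4 * ε⁻¹^2 * (ε^2 / (ε^2 + Δt * cm1))^2))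
        ≤ |γ| + 1 / Real.sqrt (Δt * cm1)) := by
  have hD : 0 < Δt * cm1 := mul_pos hΔt hc
  have hsD : 0 < Real.sqrt (Δt * cm1) := Real.sqrt_pos.mpr hD
  have hsq : Real.sqrt (Δt * cm1) ^ 2 = Δt * cm1 := Real.sq_sqrt hD.le
  -- part 4 first (used in part 5)
  have part4 : ∀ ε : ℝ, 0 < ε →
      ε / (ε^2 + Δt * cm1) ≤ 1 / (2 * Real.sqrt (Δt * cm1)) := by
    intro ε hε
    rw [div_le_div_iff₀ (by positivity) (by positivity)]
    nlinarith [sq_nonneg (ε - Real.sqrt (Δt * cm1))]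
  refine ⟨?_, ?_, ?_, part4, ?_⟩
  · intro a ha b hb hab
    simp only [Set.mem_Ioi] at ha hb
    rw [div_lt_div_iff₀ (by positivity) (by positivity)]
    nlinarith [mul_self_lt_mul_self ha.le hab]
  · have hcont : ContinuousAt (fun ε : ℝ => ε^2 / (ε^2 + Δt * cm1)) 0 := by
      apply ContinuousAt.div (by fun_prop) (by fun_prop)
      simpa using hD.ne'
    have := hcont.continuousWithinAt (s := Set.Ioi 0)
    simpa [ContinuousWithinAt] using this
  · have h1 : Tendsto (fun ε : ℝ => ε^2 + Δt * cm1) atTop atTop :=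
      tendsto_atTop_add_const_right _ _ (tendsto_pow_atTop two_ne_zero)
    have h2 : Tendsto (fun ε : ℝ => 1 - (Δt * cm1) / (ε^2 + Δt * cm1)) atTop (nhds 1) := by
      have := tendsto_const_nhds (x := (Δt * cm1)) (f := atTop (α := ℝ)) |>.div_atTop h1
      simpa using tendsto_const_nhds.sub this
    refine h2.congr fun ε => ?_
    have : (0:ℝ) < ε^2 + Δt * cm1 := by positivity
    field_simp; ring
  · intro ε hε
    set θ : ℝ := ε^2 / (ε^2 + Δt * cm1) with hθdef
    have hden : (0:ℝ) < ε^2 + Δt * cm1 := by positivity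
    have hθ0 : 0 ≤ θ := by positivity
    have hθ1 : θ ≤ 1 := by
      rw [hθdef, div_le_one hden]; nlinarith
    have hεinv : 0 ≤ ε⁻¹ := by positivity
    have hamgm : ε⁻¹ * θ ≤ 1 / (2 * Real.sqrt (Δt * cm1)) := by
      have heq : ε⁻¹ * θ = ε / (ε^2 + Δt * cm1) := by
        rw [hθdef]; field_simp
      rw [heq]; exact part4 ε hε
    have hRnn : 0 ≤ |γ| * (1 - θ) + 2 * (ε⁻¹ * θ) := by
      have := abs_nonneg γ
      nlinarith
    have hrt : Real.sqrt (γ^2 * (1 - θ)^2 + 4 * ε⁻¹^2 * θ^2)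
        ≤ |γ| * (1 - θ) + 2 * (ε⁻¹ * θ) := by
      have h2 : γ^2 * (1 - θ)^2 + 4 * ε⁻¹^2 * θ^2
          ≤ (|γ| * (1 - θ) + 2 * (ε⁻¹ * θ))^2 := by
        nlinarith [sq_abs γ, abs_nonneg γ,
          mul_nonneg (mul_nonneg (abs_nonneg γ) (sub_nonneg.mpr hθ1))
            (mul_nonneg hεinv hθ0)]
      calc Real.sqrt (γ^2 * (1 - θ)^2 + 4 * ε⁻¹^2 * θ^2)
          ≤ Real.sqrt ((|γ| * (1 - θ) + 2 * (ε⁻¹ * θ))^2) := Real.sqrt_le_sqrt h2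
        _ = |γ| * (1 - θ) + 2 * (ε⁻¹ * θ) := Real.sqrt_sq hRnn
    have hγθ : γ * (1 - θ) ≤ |γ| * (1 - θ) :=
      mul_le_mul_of_nonneg_right (le_abs_self γ) (sub_nonneg.mpr hθ1)
    have hγ1 : |γ| * (1 - θ) ≤ |γ| := by
      nlinarith [abs_nonneg γ]
    have hhalf : 1 / (2 * Real.sqrt (Δt * cm1)) ≤ 1 / Real.sqrt (Δt * cm1) := by
      apply one_div_le_one_div_of_le hsD; linarith
    have h2amgm : 2 * (ε⁻¹ * θ) ≤ 1 / Real.sqrt (Δt * cm1) := by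
      have : 2 * (ε⁻¹ * θ) ≤ 2 * (1 / (2 * Real.sqrt (Δt * cm1))) := by linarith
      calc 2 * (ε⁻¹ * θ) ≤ 2 * (1 / (2 * Real.sqrt (Δt * cm1))) := this
        _ = 1 / Real.sqrt (Δt * cm1) := by field_simp
    nlinarith [one_div_pos.mpr hsD]
end

section
/- Let s ≥ 1 and p ≤ s. The 2p+1 linear constraints on (a, b, c_{-1}, c) ∈ ℝ^s × ℝ^s × ℝ × ℝ^s given by the IMEX order conditions of order p — namely 1+Σ_j a_j = 0, and for each k = 1,…,p both 1/k! + Σ_j (-j)^k a_j/k! = Σ_j (-j)^(k-1) b_j/(k-1)! and 1/k! + Σ_j (-j)^k a_j/k! = c_{-1}/(k-1)! + Σ_j (-j)^(k-1) c_j/(k-1)! — are linearly independent as linear functionals on ℝ^(3s+1). -/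
/-- Coefficient vectors (on (a, b, c₋₁, c) ∈ ℝ^s × ℝ^s × ℝ × ℝ^s) of the
linear parts of the 2p+1 order-p IMEX order conditions: `none` is the
normalization Σ aⱼ; `some (inl k)` is the explicit condition of order k+1;
`some (inr k)` is the implicit condition of order k+1. -/
noncomputable def imexConditionVector (s p : ℕ) :
    Option (Fin p ⊕ Fin p) → (Fin s → ℝ) × (Fin s → ℝ) × ℝ × (Fin s → ℝ)
  | none => ((fun _ => 1), 0, 0, 0)
  | some (.inl k) =>
      ((fun j => (-(j.1 : ℝ)) ^ ((k : ℕ) + 1) / (Nat.factorial ((k : ℕ) + 1) : ℝ)),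
       (fun j => -(-(j.1 : ℝ)) ^ (k : ℕ) / (Nat.factorial (k : ℕ) : ℝ)), 0, 0)
  | some (.inr k) =>
      ((fun j => (-(j.1 : ℝ)) ^ ((k : ℕ) + 1) / (Nat.factorial ((k : ℕ) + 1) : ℝ)),
       0, -(1 : ℝ) / (Nat.factorial (k : ℕ) : ℝ),
       (fun j => -(-(j.1 : ℝ)) ^ (k : ℕ) / (Nat.factorial (k : ℕ) : ℝ)))

open Polynomial in
lemma aux_poly (s p : ℕ) (hp : p ≤ s) (c : Fin p → ℝ)
    (h : ∀ j : Fin s, ∑ k : Fin p, c k * (-(j.1 : ℝ)) ^ (k : ℕ) = 0) :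
    ∀ k, c k = 0 := by
  rcases Nat.eq_zero_or_pos p with hp0 | hp0
  · subst hp0; exact fun k => k.elim0
  set P : ℝ[X] := ∑ k : Fin p, C (c k) * X ^ (k : ℕ) with hP
  have hdeg : P.natDegree < p := by
    apply lt_of_le_of_lt (natDegree_sum_le_of_forall_le _ _ (n := p - 1) ?_)
    · omega
    · intro k _
      apply le_trans (natDegree_C_mul_le _ _)
      simp only [natDegree_X_pow]
      omega
  have hinj : Function.Injective (fun j : Fin s => -(j.1 : ℝ)) := by
    intro a b hab
    simp only [neg_inj, Nat.cast_inj] at hab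
    exact Fin.ext hab
  have hzero : P = 0 := by
    apply P.eq_zero_of_natDegree_lt_card_of_eval_eq_zero hinj
    · intro j
      simpa [P, Polynomial.eval_finset_sum] using h j
    · simpa using lt_of_lt_of_le hdeg hp
  intro k
  have := congrArg (fun q => Polynomial.coeff q (k : ℕ)) hzero
  simp only [P, Polynomial.finset_sum_coeff, Polynomial.coeff_C_mul,
    Polynomial.coeff_X_pow, Polynomial.coeff_zero] at this
  rw [Finset.sum_eq_single k] at this
  · simpa using this
  · intro b _ hb
    have : (b : ℕ) ≠ (k : ℕ) := fun h => hb (Fin.ext h)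
    simp [this.symm]
  · simp


/-- For p ≤ s, the 2p+1 linear constraints given by the IMEX order conditions
of order p are linearly independent as functionals on ℝ^(3s+1). -/
theorem stmt_19 (s p : ℕ) (hs : 1 ≤ s) (hp : p ≤ s) :
    LinearIndependent ℝ (imexConditionVector s p) := by
  rw [Fintype.linearIndependent_iff]
  intro g hg
  -- b-component
  have hb : ∀ j : Fin s, ∑ k : Fin p,
      (-(g (some (.inl k))) / (Nat.factorial (k : ℕ) : ℝ)) * (-(j.1 : ℝ)) ^ (k : ℕ) = 0 := by
    intro j
    have h := congrFun (congrArg (fun x => x.2.1) hg) j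
    simp only [imexConditionVector, Fintype.sum_option, Fintype.sum_sum_type,
      Prod.snd_sum, Prod.fst_sum, Finset.sum_apply, Prod.smul_snd, Prod.smul_fst,
      Pi.smul_apply, smul_eq_mul, Prod.snd_add, Prod.fst_add, Pi.add_apply,
      Prod.snd_zero, Prod.fst_zero, Pi.zero_apply, smul_zero, mul_zero,
      Finset.sum_const_zero, add_zero, zero_add, mul_one] at h
    rw [← h]
    apply Finset.sum_congr rfl
    intro k _
    ring
  have hbz := aux_poly s p hp _ hb
  have hgb : ∀ k : Fin p, g (some (.inl k)) = 0 := by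
    intro k
    have := hbz k
    have hf : (Nat.factorial (k : ℕ) : ℝ) ≠ 0 := Nat.cast_ne_zero.mpr (Nat.factorial_ne_zero _)
    field_simp at this
    simpa using this
  -- c-component
  have hc : ∀ j : Fin s, ∑ k : Fin p,
      (-(g (some (.inr k))) / (Nat.factorial (k : ℕ) : ℝ)) * (-(j.1 : ℝ)) ^ (k : ℕ) = 0 := by
    intro j
    have h := congrFun (congrArg (fun x => x.2.2.2) hg) j
    simp only [imexConditionVector, Fintype.sum_option, Fintype.sum_sum_type,
      Prod.snd_sum, Prod.fst_sum, Finset.sum_apply, Prod.smul_snd, Prod.smul_fst,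
      Pi.smul_apply, smul_eq_mul, Prod.snd_add, Prod.fst_add, Pi.add_apply,
      Prod.snd_zero, Prod.fst_zero, Pi.zero_apply, smul_zero, mul_zero,
      Finset.sum_const_zero, add_zero, zero_add, mul_one] at h
    rw [← h]
    apply Finset.sum_congr rfl
    intro k _
    ring
  have hgc : ∀ k : Fin p, g (some (.inr k)) = 0 := by
    intro k
    have := aux_poly s p hp _ hc k
    have hf : (Nat.factorial (k : ℕ) : ℝ) ≠ 0 := Nat.cast_ne_zero.mpr (Nat.factorial_ne_zero _)
    field_simp at this
    simpa using this
  -- a-component at j = 0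
  have hnone : g none = 0 := by
    have h := congrFun (congrArg (fun x => x.1) hg) ⟨0, hs⟩
    simp only [imexConditionVector, Fintype.sum_option, Fintype.sum_sum_type,
      Prod.fst_sum, Finset.sum_apply, Prod.smul_fst,
      Pi.smul_apply, smul_eq_mul, Prod.fst_add, Pi.add_apply,
      Prod.fst_zero, Pi.zero_apply, mul_one] at h
    simp only [hgb, hgc, zero_mul, Finset.sum_const_zero, add_zero] at h
    exact h
  intro i
  match i with
  | none => exact hnone
  | some (.inl k) => exact hgb k
  | some (.inr k) => exact hgc k
end
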